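/- Let δ ∈ (0,1), let (Ω, F, μ) be a probability space, and let P*(ω) be a measurable random transition model with p*_{s,a}(ω) ∈ Δ^S for each state–action pair (s,a). Let p̄_{s,a} = E_μ[p*_{s,a}] and let ψ^B_{s,a} ≥ 0 satisfy μ[{ω : ‖p*_{s,a}(ω) − p̄_{s,a}‖₁ > ψ^B_{s,a}}] < δ/(SA) for each (s,a). Define the Bayesian credible ambiguity set P^B_{s,a} = {p ∈ Δ^S : ‖p − p̄_{s,a}‖₁ ≤ ψ^B_{s,a}}, and assume the event E = {ω : for every deterministic policy π, v̂_{P^B}^π ≤ v_{P*(ω)}^π componentwise} is measurable. Then μ[E] ≥ 1 − δ. (Theorem 3: safety of BCI ambiguity sets.) -/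

import Mathlib

open MeasureTheory

noncomputable section

/-- Inner product of two vectors in `ℝ^S`. -/
def dot {S : ℕ} (p v : Fin S → ℝ) : ℝ := ∑ j, p j * v j

/-- Bellman operator for a deterministic policy `π` under transition probabilities `P`. -/
def Bellman {S A : ℕ} (r : Fin S → Fin A → ℝ) (γ : ℝ)
    (P : Fin S → Fin A → Fin S → ℝ) (π : Fin S → Fin A)
    (v : Fin S → ℝ) : Fin S → ℝ :=
  fun s => r s (π s) + γ * dot (P s (π s)) v

/-- Robust Bellman operator for a deterministic policy `π` under ambiguity set `Amb`. -/
def robustBellman {S A : ℕ} (r : Fin S → Fin A → ℝ) (γ : ℝ)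
    (Amb : Fin S → Fin A → Set (Fin S → ℝ)) (π : Fin S → Fin A)
    (v : Fin S → ℝ) : Fin S → ℝ :=
  fun s => r s (π s) + γ * sInf ((fun p => dot p v) '' Amb s (π s))

/-- Theorem 3: safety of the Bayesian credible region (BCI) ambiguity sets.  If each `L1` ball
`AmbB s a` of radius `ψB s a` around the posterior mean `pbar s a` misses the random true
transition probability with probability less than `δ/(SA)`, then with probability at least
`1 − δ` the robust value function lower-bounds the true value function simultaneously for all
deterministic policies. -/
theorem bci_safety
    {S A : ℕ} (hS : 0 < S) (hA : 0 < A)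
    (r : Fin S → Fin A → ℝ) (γ : ℝ) (hγ0 : 0 ≤ γ) (hγ1 : γ < 1)
    (δ : ℝ) (hδ0 : 0 < δ) (hδ1 : δ < 1)
    {Ω : Type*} [MeasurableSpace Ω] (μ : Measure Ω) [IsProbabilityMeasure μ]
    -- the random true transition model
    (Pstar : Ω → Fin S → Fin A → Fin S → ℝ)
    (hPstarMeas : ∀ s a, Measurable fun ω => Pstar ω s a)
    (hPstarSimplex : ∀ ω s a, Pstar ω s a ∈ stdSimplex ℝ (Fin S))
    -- the posterior mean transition probabilities
    (pbar : Fin S → Fin A → Fin S → ℝ)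
    (hpbar : ∀ s a j, pbar s a j = ∫ ω, Pstar ω s a j ∂μ)
    -- the credible-region radii
    (ψB : Fin S → Fin A → ℝ) (hψB : ∀ s a, 0 ≤ ψB s a)
    (hψBcred : ∀ s a,
      μ {ω | ψB s a < ∑ j, |Pstar ω s a j - pbar s a j|} < ENNReal.ofReal (δ / (S * A)))
    -- the BCI ambiguity set
    (AmbB : Fin S → Fin A → Set (Fin S → ℝ))
    (hAmbB : ∀ s a, AmbB s a =
      {p ∈ stdSimplex ℝ (Fin S) | ∑ j, |p j - pbar s a j| ≤ ψB s a})
    -- robust value function of each policy under the BCI ambiguity set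
    (vR : (Fin S → Fin A) → Fin S → ℝ)
    (hvR : ∀ π, vR π = robustBellman r γ AmbB π (vR π))
    -- true value function of each policy under the realized true model
    (vT : Ω → (Fin S → Fin A) → Fin S → ℝ)
    (hvT : ∀ ω π, vT ω π = Bellman r γ (Pstar ω) π (vT ω π))
    -- the simultaneous safety event is measurable
    (hEMeas : MeasurableSet {ω | ∀ π : Fin S → Fin A, ∀ s, vR π s ≤ vT ω π s}) :
    ENNReal.ofReal (1 - δ) ≤ μ {ω | ∀ π : Fin S → Fin A, ∀ s, vR π s ≤ vT ω π s} := by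

  classical
  have hSne : Nonempty (Fin S) := ⟨⟨0, hS⟩⟩
  set G : Set Ω := {ω | ∀ s a, ∑ j, |Pstar ω s a j - pbar s a j| ≤ ψB s a} with hGdef
  -- G is contained in the safety event
  have hGE : G ⊆ {ω | ∀ π : Fin S → Fin A, ∀ s, vR π s ≤ vT ω π s} := by
    intro ω hω π
    have hmem : ∀ s a, Pstar ω s a ∈ AmbB s a := by
      intro s a
      rw [hAmbB]
      exact ⟨hPstarSimplex ω s a, hω s a⟩
    have hkey : ∀ v : Fin S → ℝ, ∀ s,
        robustBellman r γ AmbB π v s ≤ Bellman r γ (Pstar ω) π v s := by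
      intro v s
      simp only [robustBellman, Bellman]
      have hbdd : BddBelow ((fun p => dot p v) '' AmbB s (π s)) := by
        refine ⟨-(∑ j, |v j|), ?_⟩
        rintro x ⟨p, hp, rfl⟩
        rw [hAmbB] at hp
        obtain ⟨⟨hp0, hp1⟩, -⟩ := hp
        have hterm : ∀ j, -|v j| ≤ p j * v j := by
          intro j
          have hpj1 : p j ≤ 1 := by
            calc p j ≤ ∑ i, p i :=
                  Finset.single_le_sum (fun i _ => hp0 i) (Finset.mem_univ j)
              _ = 1 := hp1
          nlinarith [abs_nonneg (v j), hp0 j, neg_abs_le (v j)]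
        calc -(∑ j, |v j|) = ∑ j, -|v j| := by rw [Finset.sum_neg_distrib]
          _ ≤ ∑ j, p j * v j := Finset.sum_le_sum fun j _ => hterm j
          _ = dot p v := rfl
      have hle : sInf ((fun p => dot p v) '' AmbB s (π s)) ≤ dot (Pstar ω s (π s)) v :=
        csInf_le hbdd ⟨_, hmem s (π s), rfl⟩
      nlinarith
    -- fixed point comparison
    obtain ⟨s₀, -, hs₀⟩ :=
      Finset.exists_mem_eq_sup' (Finset.univ_nonempty (α := Fin S))
        (fun s => vR π s - vT ω π s)
    set D := Finset.univ.sup' (Finset.univ_nonempty (α := Fin S))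
      (fun s => vR π s - vT ω π s) with hDdef
    have hDle : ∀ s, vR π s - vT ω π s ≤ D := by
      intro s
      rw [hDdef]
      exact Finset.le_sup' (fun s => vR π s - vT ω π s) (Finset.mem_univ s)
    obtain ⟨hp0, hp1⟩ := hPstarSimplex ω s₀ (π s₀)
    have hsum : dot (Pstar ω s₀ (π s₀)) (vR π) - dot (Pstar ω s₀ (π s₀)) (vT ω π) ≤ D := by
      have heq : dot (Pstar ω s₀ (π s₀)) (vR π) - dot (Pstar ω s₀ (π s₀)) (vT ω π)
          = ∑ j, Pstar ω s₀ (π s₀) j * (vR π j - vT ω π j) := by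
        simp only [dot, ← Finset.sum_sub_distrib]
        exact Finset.sum_congr rfl fun j _ => by ring
      rw [heq]
      calc ∑ j, Pstar ω s₀ (π s₀) j * (vR π j - vT ω π j)
          ≤ ∑ j, Pstar ω s₀ (π s₀) j * D :=
            Finset.sum_le_sum fun j _ => mul_le_mul_of_nonneg_left (hDle j) (hp0 j)
        _ = D := by rw [← Finset.sum_mul, hp1, one_mul]
    have h1 : vR π s₀ ≤ Bellman r γ (Pstar ω) π (vR π) s₀ := by
      conv_lhs => rw [hvR π]
      exact hkey (vR π) s₀
    have h2 : vT ω π s₀ = Bellman r γ (Pstar ω) π (vT ω π) s₀ := by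
      conv_lhs => rw [hvT ω π]
    simp only [Bellman] at h1 h2
    have hfix : D ≤ γ * D := by
      have : vR π s₀ - vT ω π s₀ ≤ γ * (dot (Pstar ω s₀ (π s₀)) (vR π)
          - dot (Pstar ω s₀ (π s₀)) (vT ω π)) := by linarith
      calc D = vR π s₀ - vT ω π s₀ := hs₀
        _ ≤ γ * (dot (Pstar ω s₀ (π s₀)) (vR π) - dot (Pstar ω s₀ (π s₀)) (vT ω π)) := this
        _ ≤ γ * D := mul_le_mul_of_nonneg_left (by linarith [hsum]) hγ0
    have hD0 : D ≤ 0 := by nlinarith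
    intro s
    linarith [hDle s]
  -- union bound for the bad events
  set Bad : Fin S → Fin A → Set Ω :=
    fun s a => {ω | ψB s a < ∑ j, |Pstar ω s a j - pbar s a j|} with hBdef
  have hn : (0:ℝ) < (S : ℝ) * (A : ℝ) := by positivity
  have hBadBound : ∀ s a, μ (Bad s a) ≤ ENNReal.ofReal (δ / (S * A)) :=
    fun s a => (hψBcred s a).le
  have hUnion : μ (⋃ s, ⋃ a, Bad s a) ≤ ENNReal.ofReal δ := by
    calc μ (⋃ s, ⋃ a, Bad s a) ≤ ∑ s : Fin S, μ (⋃ a, Bad s a) := by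
          refine le_trans (measure_iUnion_le _) ?_
          rw [tsum_fintype]
      _ ≤ ∑ s : Fin S, ∑ a : Fin A, μ (Bad s a) := by
          refine Finset.sum_le_sum fun s _ => ?_
          refine le_trans (measure_iUnion_le _) ?_
          rw [tsum_fintype]
      _ ≤ ∑ _s : Fin S, ∑ _a : Fin A, ENNReal.ofReal (δ / (S * A)) :=
          Finset.sum_le_sum fun s _ => Finset.sum_le_sum fun a _ => hBadBound s a
      _ = (S * A : ℕ) * ENNReal.ofReal (δ / (S * A)) := by
          simp [Finset.sum_const, nsmul_eq_mul]
          push_cast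
          ring
      _ = ENNReal.ofReal δ := by
          rw [← ENNReal.ofReal_natCast (S * A), ← ENNReal.ofReal_mul (by positivity)]
          congr 1
          push_cast
          field_simp
  have hcover : (Set.univ : Set Ω) ⊆ G ∪ ⋃ s, ⋃ a, Bad s a := by
    intro ω _
    by_cases h : ∀ s a, ∑ j, |Pstar ω s a j - pbar s a j| ≤ ψB s a
    · exact Or.inl h
    · push_neg at h
      obtain ⟨s, a, h⟩ := h
      exact Or.inr (Set.mem_iUnion.2 ⟨s, Set.mem_iUnion.2 ⟨a, h⟩⟩)
  have h1 : (1 : ENNReal) ≤ μ G + ENNReal.ofReal δ := by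
    calc (1 : ENNReal) = μ Set.univ := (measure_univ (μ := μ)).symm
      _ ≤ μ (G ∪ ⋃ s, ⋃ a, Bad s a) := measure_mono hcover
      _ ≤ μ G + μ (⋃ s, ⋃ a, Bad s a) := measure_union_le _ _
      _ ≤ μ G + ENNReal.ofReal δ := add_le_add_right hUnion _
  have h2 : ENNReal.ofReal (1 - δ) ≤ μ G := by
    rw [ENNReal.ofReal_sub 1 hδ0.le, ENNReal.ofReal_one]
    exact tsub_le_iff_right.mpr h1
  exact le_trans h2 (measure_mono hGE)
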